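/- arXiv:2309.11617 — 3 statements merged into one kernel-verified Lean document; each statement's English description precedes it below -/
import Mathlib

section
/- Suppose a real random variable X satisfies: for every δ ∈ (0,1], with probability at least 1 − δ, X ≤ A + √(B + C log(1/δ)), where A, B are real constants, B ≥ 0, and C > 0. Then E[X] ≤ A + √B + (1/2) e^{B/C} erfc(√(B/C)) √(πC). -/
open MeasureTheory ProbabilityTheory

/-- The complementary error function `erfc z = (2/√π) ∫_z^∞ e^{-t²} dt`. -/
noncomputable def erfc (z : ℝ) : ℝ :=
  (2 / Real.sqrt Real.pi) * ∫ t in Set.Ioi z, Real.exp (-t ^ 2)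

lemma integral_Ioi_comp_add_right (f : ℝ → ℝ) (a c : ℝ) :
    ∫ x in Set.Ioi a, f (x + c) = ∫ x in Set.Ioi (a + c), f x := by
  rw [← integral_indicator measurableSet_Ioi, ← integral_indicator measurableSet_Ioi,
    ← integral_add_right_eq_self ((Set.Ioi (a + c)).indicator f) c]
  congr 1
  ext x
  simp only [Set.indicator_apply, Set.mem_Ioi, add_lt_add_iff_right]

lemma gaussian_tail_integral (z : ℝ) :
    ∫ t in Set.Ioi z, Real.exp (-t ^ 2) = Real.sqrt Real.pi / 2 * erfc z := by
  rw [erfc]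
  have h : Real.sqrt Real.pi ≠ 0 := by positivity
  field_simp

/-- From a high-probability tail bound to a bound on the expectation: if for every
`δ ∈ (0,1]`, with probability at least `1 - δ`, `X ≤ A + √(B + C log(1/δ))`, then
`E[X] ≤ A + √B + (1/2) e^{B/C} erfc(√(B/C)) √(πC)`. -/
theorem expectation_from_tail_bound {Ω : Type*} [MeasureSpace Ω]
    [IsProbabilityMeasure (ℙ : Measure Ω)]
    (X : Ω → ℝ) (hX : Integrable X ℙ)
    (A B C : ℝ) (hB : 0 ≤ B) (hC : 0 < C)
    (h : ∀ δ : ℝ, δ ∈ Set.Ioc (0 : ℝ) 1 →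
      1 - δ ≤ ((ℙ : Measure Ω) {ω : Ω | X ω ≤ A + Real.sqrt (B + C * Real.log (1 / δ))}).toReal) :
    ∫ ω, X ω ∂(ℙ : Measure Ω)
      ≤ A + Real.sqrt B
          + (1 / 2) * Real.exp (B / C) * erfc (Real.sqrt (B / C))
            * Real.sqrt (Real.pi * C) := by
  classical
  set X' : Ω → ℝ := hX.1.mk X with hX'def
  have hX'meas : StronglyMeasurable X' := hX.1.stronglyMeasurable_mk
  have hXX' : X =ᵐ[ℙ] X' := hX.1.ae_eq_mk
  have hX'int : Integrable X' ℙ := hX.congr hXX'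
  set a : ℝ := A + Real.sqrt B with ha
  set Y : Ω → ℝ := fun ω => max (X' ω - a) 0 with hY
  have hYint : Integrable Y ℙ := (hX'int.sub (integrable_const a)).pos_part
  have hYnn : 0 ≤ᵐ[ℙ] Y := Filter.Eventually.of_forall fun ω => le_max_right _ _
  -- tail bound for X'
  have tail : ∀ t : ℝ, 0 < t →
      ((ℙ : Measure Ω) {ω | t < Y ω}).toReal ≤ Real.exp ((B - (Real.sqrt B + t) ^ 2) / C) := by
    intro t ht
    set δ : ℝ := Real.exp ((B - (Real.sqrt B + t) ^ 2) / C) with hδ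
    have hsqB : Real.sqrt B ^ 2 = B := Real.sq_sqrt hB
    have hBle : B ≤ (Real.sqrt B + t) ^ 2 := by
      nlinarith [Real.sqrt_nonneg B, ht.le]
    have hδpos : 0 < δ := Real.exp_pos _
    have hδle : δ ≤ 1 := by
      rw [hδ]
      apply Real.exp_le_one_iff.2
      apply div_nonpos_of_nonpos_of_nonneg (by linarith) hC.le
    have hlog : B + C * Real.log (1 / δ) = (Real.sqrt B + t) ^ 2 := by
      rw [hδ, one_div, Real.log_inv, Real.log_exp]
      field_simp
      ring
    have hsqrt : A + Real.sqrt (B + C * Real.log (1 / δ)) = a + t := by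
      rw [hlog, Real.sqrt_sq (by positivity), ha]; ring
    have h1 := h δ ⟨hδpos, hδle⟩
    rw [hsqrt] at h1
    -- transfer the bound to X'
    have hsets : {ω | X ω ≤ a + t} =ᵐ[ℙ] {ω | X' ω ≤ a + t} := by
      filter_upwards [hXX'] with ω hω
      show (X ω ≤ a + t) = (X' ω ≤ a + t)
      rw [hω]
    have h2 : 1 - δ ≤ ((ℙ : Measure Ω) {ω | X' ω ≤ a + t}).toReal := by
      rwa [measure_congr hsets] at h1
    have hYset : {ω | t < Y ω} = {ω | X' ω ≤ a + t}ᶜ := by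
      ext ω
      simp only [hY, Set.mem_setOf_eq, Set.mem_compl_iff, lt_max_iff, not_le]
      constructor
      · rintro (h' | h')
        · linarith
        · linarith
      · intro h'; left; linarith
    have hms : MeasurableSet {ω | X' ω ≤ a + t} :=
      measurableSet_le hX'meas.measurable measurable_const
    rw [hYset, prob_compl_eq_one_sub hms]
    have hle1 : (ℙ : Measure Ω) {ω | X' ω ≤ a + t} ≤ 1 := prob_le_one
    rw [ENNReal.toReal_sub_of_le hle1 ENNReal.one_ne_top, ENNReal.toReal_one]
    linarith
  -- expectation splits
  have step1 : ∫ ω, X ω ∂(ℙ : Measure Ω) ≤ a + ∫ ω, Y ω ∂(ℙ : Measure Ω) := by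
    rw [integral_congr_ae hXX']
    have : ∫ ω, X' ω ∂(ℙ : Measure Ω) ≤ ∫ ω, (a + Y ω) ∂(ℙ : Measure Ω) := by
      apply integral_mono hX'int ((integrable_const a).add hYint)
      intro ω
      show X' ω ≤ a + Y ω
      have h2 : Y ω = max (X' ω - a) 0 := rfl
      have := le_max_left (X' ω - a) 0
      linarith
    calc ∫ ω, X' ω ∂(ℙ : Measure Ω) ≤ ∫ ω, (a + Y ω) ∂(ℙ : Measure Ω) := this
      _ = a + ∫ ω, Y ω ∂(ℙ : Measure Ω) := by
          rw [integral_add (integrable_const a) hYint, integral_const]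
          simp
  -- layer cake
  have layer : ∫ ω, Y ω ∂(ℙ : Measure Ω)
      = ∫ t in Set.Ioi (0 : ℝ), ((ℙ : Measure Ω) {ω | t < Y ω}).toReal :=
    hYint.integral_eq_integral_meas_lt hYnn
  -- the Gaussian majorant
  set G : ℝ → ℝ := fun t => Real.exp (B / C) * Real.exp (-(1 / C) * (t + Real.sqrt B) ^ 2)
    with hG
  have hGint : Integrable G volume := by
    apply Integrable.const_mul
    exact (integrable_exp_neg_mul_sq (by positivity : (0:ℝ) < 1 / C)).comp_add_right _
  have step2 : ∫ t in Set.Ioi (0 : ℝ), ((ℙ : Measure Ω) {ω | t < Y ω}).toReal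
      ≤ ∫ t in Set.Ioi (0 : ℝ), G t := by
    apply integral_mono_of_nonneg
    · exact Filter.Eventually.of_forall fun t => ENNReal.toReal_nonneg
    · exact hGint.restrict
    · rw [Filter.EventuallyLE, ae_restrict_iff' measurableSet_Ioi]
      refine Filter.Eventually.of_forall fun t ht => ?_
      have hGt : G t = Real.exp ((B - (Real.sqrt B + t) ^ 2) / C) := by
        show Real.exp (B / C) * Real.exp (-(1 / C) * (t + Real.sqrt B) ^ 2) = _
        rw [← Real.exp_add]
        congr 1
        field_simp
        ring
      rw [hGt]
      exact tail t ht
  -- compute the Gaussian integral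
  have hsqC : Real.sqrt C ^ 2 = C := Real.sq_sqrt hC.le
  have hsqCpos : 0 < Real.sqrt C := Real.sqrt_pos.2 hC
  have key : ∫ t in Set.Ioi (0 : ℝ), G t
      = (1 / 2) * Real.exp (B / C) * erfc (Real.sqrt (B / C)) * Real.sqrt (Real.pi * C) := by
    rw [hG]
    rw [integral_const_mul]
    have e1 : ∫ t in Set.Ioi (0 : ℝ), Real.exp (-(1 / C) * (t + Real.sqrt B) ^ 2)
        = ∫ t in Set.Ioi (Real.sqrt B), Real.exp (-(1 / C) * t ^ 2) := by
      rw [integral_Ioi_comp_add_right (fun t => Real.exp (-(1 / C) * t ^ 2)) 0 (Real.sqrt B),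
        zero_add]
    have e2 : ∫ t in Set.Ioi (Real.sqrt B), Real.exp (-(1 / C) * t ^ 2)
        = Real.sqrt C * ∫ t in Set.Ioi ((Real.sqrt C)⁻¹ * Real.sqrt B), Real.exp (-t ^ 2) := by
      have := integral_comp_mul_left_Ioi (fun u => Real.exp (-u ^ 2)) (Real.sqrt B)
        (inv_pos.2 hsqCpos)
      simp only [smul_eq_mul, inv_inv] at this
      rw [← this]
      congr 1
      ext t
      congr 1
      rw [mul_pow]
      have : ((Real.sqrt C)⁻¹) ^ 2 = 1 / C := by
        rw [inv_pow, hsqC, one_div]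
      rw [this]
      ring
    have e3 : (Real.sqrt C)⁻¹ * Real.sqrt B = Real.sqrt (B / C) := by
      rw [Real.sqrt_div hB]
      ring
    rw [e1, e2, e3, gaussian_tail_integral, Real.sqrt_mul Real.pi_pos.le]
    ring
  calc ∫ ω, X ω ∂(ℙ : Measure Ω) ≤ a + ∫ ω, Y ω ∂(ℙ : Measure Ω) := step1
    _ ≤ a + ∫ t in Set.Ioi (0 : ℝ), G t := by rw [layer]; linarith [step2]
    _ = A + Real.sqrt B + (1 / 2) * Real.exp (B / C) * erfc (Real.sqrt (B / C))
        * Real.sqrt (Real.pi * C) := by rw [key, ha]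
end

section
/- (Operator Khintchine upper bound for trace norm) Let X₁,…,X_N be Hermitian matrices and σ₁,…,σ_N independent Rademacher variables. Then E_σ ‖∑ₖ σₖ Xₖ‖₁ ≤ ‖√(∑ₖ Xₖ²)‖₁ = Tr √(∑ₖ Xₖ²). -/
open Matrix
open scoped ComplexOrder

/-- The positive semidefinite square root of a positive semidefinite matrix
(the definition of `Matrix.PosSemidef.sqrt` in the older Mathlib, since removed). -/
noncomputable def Matrix.PosSemidef.sqrt {n : Type*} [Fintype n] [DecidableEq n]
    {A : Matrix n n ℂ} (hA : A.PosSemidef) : Matrix n n ℂ :=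
  hA.1.eigenvectorUnitary.1 * diagonal ((↑) ∘ (√·) ∘ hA.1.eigenvalues) *
    (star hA.1.eigenvectorUnitary : Matrix n n ℂ)

theorem Matrix.PosSemidef.posSemidef_sqrt {n : Type*} [Fintype n] [DecidableEq n]
    {A : Matrix n n ℂ} (hA : A.PosSemidef) : hA.sqrt.PosSemidef := by
  have hd : (diagonal ((↑) ∘ (√·) ∘ hA.1.eigenvalues) : Matrix n n ℂ).PosSemidef :=
    Matrix.PosSemidef.diagonal (fun i => by
      simp only [Function.comp_apply, Pi.zero_apply]
      exact_mod_cast Real.sqrt_nonneg _)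
  have := hd.mul_mul_conjTranspose_same (hA.1.eigenvectorUnitary : Matrix n n ℂ)
  rw [← Matrix.star_eq_conjTranspose] at this
  exact this

section sqrtPort

open scoped MatrixOrder

theorem Matrix.PosSemidef.sqrt_eq_cfc_sqrt {n : Type*} [Fintype n] [DecidableEq n]
    {A : Matrix n n ℂ} (hA : A.PosSemidef) : hA.sqrt = CFC.sqrt A := by
  rw [CFC.sqrt_eq_cfc, cfc_nnreal_eq_real _ A hA.nonneg, hA.1.cfc_eq]
  simp [IsHermitian.cfc, Matrix.PosSemidef.sqrt, Function.comp_def, Unitary.conjStarAlgAut_apply,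
    fun x => max_eq_left (hA.eigenvalues_nonneg x)]

theorem Matrix.PosSemidef.sqrt_mul_self {n : Type*} [Fintype n] [DecidableEq n]
    {A : Matrix n n ℂ} (hA : A.PosSemidef) : hA.sqrt * hA.sqrt = A := by
  rw [hA.sqrt_eq_cfc_sqrt]
  exact CFC.sqrt_mul_sqrt_self A hA.nonneg

theorem Matrix.PosSemidef.eq_sqrt_of_sq_eq {n : Type*} [Fintype n] [DecidableEq n]
    {A B : Matrix n n ℂ} (hB : B.PosSemidef) (hA : A.PosSemidef) (h : B ^ 2 = A) :
    B = hA.sqrt := by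
  rw [hA.sqrt_eq_cfc_sqrt]
  exact (CFC.sqrt_unique (by rw [← sq]; exact h) hB.nonneg).symm

end sqrtPort

/-- Trace norm of a complex matrix: `Tr √(Aᴴ A)`. -/
noncomputable def traceNorm {n : Type*} [Fintype n] [DecidableEq n]
    (A : Matrix n n ℂ) : ℝ :=
  ((Matrix.posSemidef_conjTranspose_mul_self A).sqrt.trace).re

/-- Positive semidefinite square root (for PSD inputs): `(AᴴA)^{1/4}`, which equals
`√A` whenever `A` is positive semidefinite. -/
noncomputable def msqrt {n : Type*} [Fintype n] [DecidableEq n]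
    (A : Matrix n n ℂ) : Matrix n n ℂ :=
  (Matrix.posSemidef_conjTranspose_mul_self A).posSemidef_sqrt.sqrt

/-- `±1` value of a Rademacher sign encoded as a `Bool`. -/
def radR (b : Bool) : ℝ := if b then 1 else -1

lemma radR_not (b : Bool) : radR (!b) = -radR b := by cases b <;> simp [radR]

lemma radR_sq (b : Bool) : radR b * radR b = 1 := by cases b <;> simp [radR]

lemma rad_orth {N : ℕ} (j k : Fin N) :
    ∑ σ : Fin N → Bool, radR (σ j) * radR (σ k) = if j = k then (2:ℝ)^N else 0 := by
  by_cases hjk : j = k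
  · subst hjk
    simp only [radR_sq, if_pos rfl, Finset.sum_const, Finset.card_univ, nsmul_eq_mul, mul_one]
    rw [Fintype.card_fun]
    simp
  · rw [if_neg hjk]
    refine Finset.sum_involution (fun σ _ => Function.update σ j (!(σ j))) ?_ ?_
      (fun _ _ => Finset.mem_univ _) ?_
    · intro σ _
      rw [Function.update_self, Function.update_of_ne (Ne.symm hjk), radR_not]
      ring
    · intro σ _ _ heq
      have := congrFun heq j
      rw [Function.update_self] at this
      exact (σ j).not_ne_self this
    · intro σ _
      funext x
      by_cases hx : x = j
      · subst hx; simp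
      · simp [Function.update_of_ne hx]

lemma retrace_nonneg {n : Type*} [Fintype n] [DecidableEq n] {M : Matrix n n ℂ}
    (hM : M.PosSemidef) : 0 ≤ M.trace.re := by
  rw [Matrix.trace, Complex.re_sum]
  refine Finset.sum_nonneg fun i _ => ?_
  have h := hM.diag_nonneg (i := i)
  exact (Complex.le_def.mp h).1

lemma key_ineq {n : Type*} [Fintype n] [DecidableEq n] {Y T W : Matrix n n ℂ}
    (hY : Y.IsHermitian) (hT : T.IsHermitian) (hW : W.PosSemidef)
    (hTW : T * W = 1) (hWT : W * T = 1) :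
    traceNorm Y ≤ ((Y * Y * W).trace.re + T.trace.re) / 2 := by
  have hP : (Matrix.posSemidef_conjTranspose_mul_self Y).sqrt.PosSemidef :=
    (Matrix.posSemidef_conjTranspose_mul_self Y).posSemidef_sqrt
  set P := (Matrix.posSemidef_conjTranspose_mul_self Y).sqrt with hPdef
  have hP2 : P * P = Y * Y := by
    rw [hPdef, Matrix.PosSemidef.sqrt_mul_self, hY.eq]
  have hR : hW.sqrt.PosSemidef := hW.posSemidef_sqrt
  set R := hW.sqrt with hRdef
  have hR2 : R * R = W := hW.sqrt_mul_self
  have hMpsd : ((P - T) * W * (P - T)).PosSemidef := by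
    have h := Matrix.posSemidef_conjTranspose_mul_self (R * (P - T))
    have heq : (R * (P - T))ᴴ * (R * (P - T)) = (P - T) * W * (P - T) := by
      rw [conjTranspose_mul, hR.1.eq]
      have hPT : (P - T).IsHermitian := hP.1.sub hT
      rw [hPT.eq, ← hR2]
      noncomm_ring
    rwa [heq] at h
  have h0 : 0 ≤ ((P - T) * W * (P - T)).trace.re := retrace_nonneg hMpsd
  have hexp : (P - T) * W * (P - T) = P * W * P - P * W * T - T * W * P + T * W * T := by
    noncomm_ring
  have e1 : P * W * T = P := by rw [mul_assoc, hWT, mul_one]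
  have e2 : T * W * P = P := by rw [hTW, one_mul]
  have e3 : T * W * T = T := by rw [hTW, one_mul]
  have e4 : (P * W * P).trace = (Y * Y * W).trace := by
    rw [trace_mul_comm (P * W) P, ← mul_assoc, hP2, trace_mul_comm]
  rw [hexp, e1, e2, e3] at h0
  rw [trace_add, trace_sub, trace_sub, e4] at h0
  simp only [Complex.add_re, Complex.sub_re] at h0
  have hTN : traceNorm Y = P.trace.re := rfl
  rw [hTN]
  linarith

/-- Operator Khintchine inequality, upper bound for the trace norm:
for Hermitian matrices `X₁,…,X_N`, `E_σ ‖∑ₖ σₖ Xₖ‖₁ ≤ Tr √(∑ₖ Xₖ²)`. -/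
theorem operator_khintchine_upper {d N : ℕ}
    (X : Fin N → Matrix (Fin d) (Fin d) ℂ) (hX : ∀ k, (X k).IsHermitian) :
    ((2 : ℝ) ^ N)⁻¹ * ∑ σ : Fin N → Bool, traceNorm (∑ k, radR (σ k) • X k)
      ≤ ((msqrt (∑ k, X k * X k)).trace).re := by
  classical
  have reMul : ∀ (r : ℝ) (z : ℂ), ((r:ℂ) * z).re = r * z.re := fun r z => by
    simp [Complex.mul_re]
  have hS : (∑ k, X k * X k).PosSemidef := by
    refine Finset.sum_induction _ _ (fun a b ha hb => ha.add hb) .zero (fun k _ => ?_)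
    nth_rewrite 1 [← (hX k).eq]
    exact Matrix.posSemidef_conjTranspose_mul_self _
  have hQ : hS.sqrt.PosSemidef := hS.posSemidef_sqrt
  set Q := hS.sqrt with hQdef
  have hQ2 : Q * Q = ∑ k, X k * X k := hS.sqrt_mul_self
  have hgen : ∀ (B : Matrix (Fin d) (Fin d) ℂ) (hB : B.PosSemidef),
      B = (∑ k, X k * X k) → hB.sqrt = Q := by
    rintro B hB rfl; rfl
  have hRHS : ((msqrt (∑ k, X k * X k)).trace).re = Q.trace.re := by
    rw [msqrt, hgen _ _ ((hS.eq_sqrt_of_sq_eq (Matrix.posSemidef_conjTranspose_mul_self _)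
      (by rw [pow_two, hS.1.eq])).symm)]
  have hYh : ∀ σ : Fin N → Bool, (∑ k, radR (σ k) • X k).IsHermitian := fun σ => by
    show (∑ k, radR (σ k) • X k)ᴴ = ∑ k, radR (σ k) • X k
    rw [conjTranspose_sum]
    exact Finset.sum_congr rfl fun k _ => by
      rw [conjTranspose_smul, star_trivial, (hX k).eq]
  have hsum : ∑ σ : Fin N → Bool, ((∑ k, radR (σ k) • X k) * (∑ k, radR (σ k) • X k))
      = ((2:ℝ)^N) • ∑ k, X k * X k := by
    have e1 : ∀ σ : Fin N → Bool, (∑ k, radR (σ k) • X k) * (∑ k, radR (σ k) • X k)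
        = ∑ j, ∑ k, (radR (σ j) * radR (σ k)) • (X j * X k) := fun σ => by
      rw [Finset.sum_mul_sum]
      simp only [smul_mul_smul_comm]
    simp only [e1]
    rw [Finset.sum_comm]
    have e2 : ∀ j, ∑ σ : Fin N → Bool, ∑ k, (radR (σ j) * radR (σ k)) • (X j * X k)
        = ∑ k, (∑ σ : Fin N → Bool, radR (σ j) * radR (σ k)) • (X j * X k) := fun j => by
      rw [Finset.sum_comm]
      simp only [Finset.sum_smul]
    simp only [e2, rad_orth, ite_smul, zero_smul, Finset.sum_ite_eq, Finset.mem_univ, if_true]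
    rw [Finset.smul_sum]
  have h2pos : (0:ℝ) < (2:ℝ)^N := by positivity
  have main : ∀ ε : ℝ, 0 < ε →
      ((2 : ℝ) ^ N)⁻¹ * ∑ σ : Fin N → Bool, traceNorm (∑ k, radR (σ k) • X k)
        ≤ Q.trace.re + ε * ((d:ℝ) / 2) := by
    intro ε hε
    have hId : ((ε:ℂ) • (1 : Matrix (Fin d) (Fin d) ℂ)).PosDef := by
      rw [← Matrix.diagonal_one, ← Matrix.diagonal_smul]
      refine Matrix.posDef_diagonal_iff.mpr fun i => ?_
      simpa using Complex.zero_lt_real.mpr hε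
    set T := Q + (ε:ℂ) • (1 : Matrix (Fin d) (Fin d) ℂ) with hTdef
    have hT : T.PosDef := Matrix.PosDef.posSemidef_add hQ hId
    have hdet : IsUnit T.det := isUnit_iff_ne_zero.mpr hT.det_pos.ne'
    have hWpd : (T⁻¹).PosDef := hT.inv
    set W := T⁻¹ with hWdef
    have hW : W.PosSemidef := hWpd.posSemidef
    have hTW : T * W = 1 := mul_nonsing_inv T hdet
    have hWT : W * T = 1 := nonsing_inv_mul T hdet
    have hTrT : T.trace.re = Q.trace.re + ε * d := by
      rw [hTdef, trace_add, trace_smul, trace_one]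
      simp only [Complex.add_re, smul_eq_mul]
      rw [reMul]
      simp
    have hQW : 0 ≤ (Q * W).trace.re := by
      have hR : hW.sqrt.PosSemidef := hW.posSemidef_sqrt
      have hR2 : hW.sqrt * hW.sqrt = W := hW.sqrt_mul_self
      have hpsd : (hW.sqrt * Q * hW.sqrt).PosSemidef := by
        have h := hQ.conjTranspose_mul_mul_same hW.sqrt
        rwa [hR.1.eq] at h
      have htr : (hW.sqrt * Q * hW.sqrt).trace = (Q * W).trace := by
        rw [trace_mul_comm (hW.sqrt * Q), ← mul_assoc, hR2, trace_mul_comm W Q]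
      rw [← htr]
      exact retrace_nonneg hpsd
    have hSW : ((∑ k, X k * X k) * W).trace.re ≤ Q.trace.re := by
      have hkey : Q * Q * W + (ε:ℂ) • (Q * W) = Q := by
        have h1 : Q * T * W = Q := by rw [mul_assoc, hTW, mul_one]
        have h2 : Q * T = Q * Q + (ε:ℂ) • Q := by rw [hTdef, mul_add, mul_smul_comm, mul_one]
        calc Q * Q * W + (ε:ℂ) • (Q * W) = (Q * Q + (ε:ℂ) • Q) * W := by
              rw [add_mul, smul_mul_assoc]
          _ = Q * T * W := by rw [← h2]
          _ = Q := h1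
      have htr := congrArg (fun M : Matrix (Fin d) (Fin d) ℂ => M.trace.re) hkey
      simp only [trace_add, trace_smul, Complex.add_re, smul_eq_mul] at htr
      rw [reMul] at htr
      rw [← hQ2]
      nlinarith [mul_nonneg hε.le hQW]
    have hptwise : ∀ σ : Fin N → Bool, traceNorm (∑ k, radR (σ k) • X k)
        ≤ (((∑ k, radR (σ k) • X k) * (∑ k, radR (σ k) • X k) * W).trace.re
            + T.trace.re) / 2 :=
      fun σ => key_ineq (hYh σ) hT.isHermitian hW hTW hWT
    have hsum2 : ∑ σ : Fin N → Bool,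
        ((∑ k, radR (σ k) • X k) * (∑ k, radR (σ k) • X k) * W).trace.re
        = (2:ℝ)^N * ((∑ k, X k * X k) * W).trace.re := by
      rw [← Complex.re_sum, ← trace_sum, ← Finset.sum_mul, hsum, smul_mul_assoc, trace_smul,
        Complex.smul_re, smul_eq_mul]
    have hcard : (Finset.univ : Finset (Fin N → Bool)).card = 2^N := by
      rw [Finset.card_univ, Fintype.card_fun]
      simp
    calc ((2 : ℝ) ^ N)⁻¹ * ∑ σ : Fin N → Bool, traceNorm (∑ k, radR (σ k) • X k)
        ≤ ((2 : ℝ) ^ N)⁻¹ * ∑ σ : Fin N → Bool,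
            ((((∑ k, radR (σ k) • X k) * (∑ k, radR (σ k) • X k) * W).trace.re
              + T.trace.re) / 2) := by
          exact mul_le_mul_of_nonneg_left (Finset.sum_le_sum fun σ _ => hptwise σ)
            (by positivity)
      _ = (((∑ k, X k * X k) * W).trace.re + T.trace.re) / 2 := by
          rw [← Finset.sum_div, Finset.sum_add_distrib, hsum2, Finset.sum_const, hcard,
            nsmul_eq_mul]
          push_cast
          field_simp
      _ ≤ Q.trace.re + ε * ((d:ℝ) / 2) := by
          rw [hTrT]
          linarith
  rw [hRHS]
  refine le_of_forall_pos_le_add fun δ hδ => ?_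
  have h := main (δ / ((d:ℝ) + 1)) (by positivity)
  refine h.trans (add_le_add_right ?_ _)
  have hd0 : (0:ℝ) ≤ (d:ℝ) := Nat.cast_nonneg d
  rw [div_mul_div_comm, div_le_iff₀ (by positivity)]
  nlinarith
end

section
/- (Lipschitz constant of the majority-vote error function) Let V = 2v+1 be odd and define c_v(p) = ∑_{n=0}^{v} C(2v+1,n) p^n (1−p)^{2v+1−n} for p ∈ [0,1] (the probability that at most v of 2v+1 independent trials succeed when each succeeds with probability p). Then c_v is differentiable on (0,1) and |c_v'(p)| ≤ 2√((v+1)/π); in particular c_v is 2√((V+1)/(2π))-Lipschitz. -/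
open Finset

/-- The majority-vote error function: the probability that at most `v` of `2v+1`
independent trials succeed, when each succeeds with probability `p`. -/
noncomputable def majErr (v : ℕ) (p : ℝ) : ℝ :=
  ∑ n ∈ Finset.range (v + 1),
    (Nat.choose (2 * v + 1) n : ℝ) * p ^ n * (1 - p) ^ (2 * v + 1 - n)

lemma tele (M : ℕ) (p : ℝ) : ∀ k, k ≤ M →
    HasDerivAt (fun q : ℝ => ∑ n ∈ Finset.range (k + 1),
        (Nat.choose (M + 1) n : ℝ) * q ^ n * (1 - q) ^ (M + 1 - n))
      (-(((M : ℝ) + 1) * (Nat.choose M k : ℝ) * p ^ k * (1 - p) ^ (M - k))) p := by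
  have h1 : HasDerivAt (fun q : ℝ => 1 - q) (-1) p := by
    simpa using (hasDerivAt_id p).const_sub 1
  intro k
  induction k with
  | zero =>
    intro _
    have h : HasDerivAt (fun q : ℝ => (1 - q) ^ (M + 1))
        ((((M + 1 : ℕ) : ℝ) * (1 - p) ^ M) * (-1)) p :=
      (hasDerivAt_pow (M + 1) (1 - p)).comp p h1
    have h2 : HasDerivAt (fun q : ℝ => ∑ n ∈ Finset.range 1,
        (Nat.choose (M + 1) n : ℝ) * q ^ n * (1 - q) ^ (M + 1 - n))
        ((((M + 1 : ℕ) : ℝ) * (1 - p) ^ M) * (-1)) p := by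
      simp only [Finset.sum_range_one, Nat.choose_zero_right, Nat.cast_one, pow_zero, one_mul,
        Nat.sub_zero]
      exact h
    have heq : -(((M : ℝ) + 1) * (Nat.choose M 0 : ℝ) * p ^ 0 * (1 - p) ^ (M - 0))
        = (((M + 1 : ℕ) : ℝ) * (1 - p) ^ M) * (-1) := by
      simp only [Nat.choose_zero_right, Nat.cast_one, pow_zero, Nat.sub_zero]
      push_cast
      ring
    rw [heq]
    exact h2
  | succ k ih =>
    intro hk
    have hkM : k ≤ M := by omega
    have ihh := ih hkM
    -- identities
    have idA : (M + 1) * Nat.choose M k = Nat.choose (M + 1) (k + 1) * (k + 1) :=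
      Nat.add_one_mul_choose_eq M k
    have idB : Nat.choose M (k + 1) * (M + 1) = Nat.choose (M + 1) (k + 1) * (M + 1 - (k + 1)) :=
      Nat.choose_mul_succ_eq M (k + 1)
    have hsub : M + 1 - (k + 1) = M - k := by omega
    have hsub2 : M - k = (M - (k + 1)) + 1 := by omega
    have hpow1 : HasDerivAt (fun q : ℝ => q ^ (k + 1))
        (((k + 1 : ℕ) : ℝ) * p ^ k) p := by
      simpa using hasDerivAt_pow (k + 1) p
    have hpow2 : HasDerivAt (fun q : ℝ => (1 - q) ^ (M - k))
        ((((M - k : ℕ) : ℝ) * (1 - p) ^ (M - k - 1)) * (-1)) p :=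
      (hasDerivAt_pow (M - k) (1 - p)).comp p h1
    have hterm : HasDerivAt (fun q : ℝ =>
        (Nat.choose (M + 1) (k + 1) : ℝ) * (q ^ (k + 1) * (1 - q) ^ (M - k)))
        ((Nat.choose (M + 1) (k + 1) : ℝ) *
          ((((k + 1 : ℕ) : ℝ) * p ^ k) * (1 - p) ^ (M - k) +
           p ^ (k + 1) * ((((M - k : ℕ) : ℝ) * (1 - p) ^ (M - k - 1)) * (-1)))) p :=
      (hpow1.mul hpow2).const_mul _
    have htot := ihh.add hterm
    have hfun : (fun q : ℝ => (∑ n ∈ Finset.range (k + 1),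
          (Nat.choose (M + 1) n : ℝ) * q ^ n * (1 - q) ^ (M + 1 - n)) +
          (Nat.choose (M + 1) (k + 1) : ℝ) * (q ^ (k + 1) * (1 - q) ^ (M - k)))
        = (fun q : ℝ => ∑ n ∈ Finset.range (k + 1 + 1),
          (Nat.choose (M + 1) n : ℝ) * q ^ n * (1 - q) ^ (M + 1 - n)) := by
      funext q
      conv_rhs => rw [Finset.sum_range_succ]
      rw [hsub]
      ring
    change HasDerivAt (fun q : ℝ => (∑ n ∈ Finset.range (k + 1), (Nat.choose (M + 1) n : ℝ) * q ^ n * (1 - q) ^ (M + 1 - n)) + (Nat.choose (M + 1) (k + 1) : ℝ) * (q ^ (k + 1) * (1 - q) ^ (M - k))) _ p at htot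
    rw [hfun] at htot
    convert htot using 1
    have hmk : M - k - 1 = M - (k + 1) := by omega
    rw [hmk, hsub2]
    rw [hsub, hsub2] at idB
    have idA' : ((M : ℝ) + 1) * (Nat.choose M k : ℝ)
        = (Nat.choose (M + 1) (k + 1) : ℝ) * ((k : ℝ) + 1) := by
      exact_mod_cast congrArg (Nat.cast : ℕ → ℝ) idA
    have idB' : (Nat.choose M (k + 1) : ℝ) * ((M : ℝ) + 1)
        = (Nat.choose (M + 1) (k + 1) : ℝ) * (((M - (k + 1) : ℕ) : ℝ) + 1) := by
      exact_mod_cast congrArg (Nat.cast : ℕ → ℝ) idB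
    push_cast
    linear_combination p ^ k * (1 - p) ^ (M - (k + 1) + 1) * idA'
      - p ^ (k + 1) * (1 - p) ^ (M - (k + 1)) * idB'

lemma majErr_hasDerivAt (v : ℕ) (p : ℝ) :
    HasDerivAt (majErr v)
      (-((2 * (v : ℝ) + 1) * (Nat.choose (2 * v) v : ℝ) * (p * (1 - p)) ^ v)) p := by
  have h := tele (2 * v) p v (by omega)
  have hs : 2 * v - v = v := by omega
  rw [hs] at h
  unfold majErr
  convert h using 1
  push_cast
  rw [mul_pow]
  ring

lemma key (v : ℕ) :
    (2 * (v : ℝ) + 1) * (Nat.choose (2 * v) v : ℝ) / 4 ^ v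
      ≤ 2 * Real.sqrt (((v : ℝ) + 1) / Real.pi) := by
  set a : ℝ := (2 * (v : ℝ) + 1) * (Nat.choose (2 * v) v : ℝ) / 4 ^ v with ha
  have hapos : 0 ≤ a := by positivity
  have hfac : (Nat.choose (2 * v) v : ℝ) * (Nat.factorial v : ℝ) * (Nat.factorial v : ℝ)
      = (Nat.factorial (2 * v) : ℝ) := by
    have := Nat.choose_mul_factorial_mul_factorial (show v ≤ 2 * v by omega)
    have h2 : 2 * v - v = v := by omega
    rw [h2] at this
    exact_mod_cast congrArg (Nat.cast : ℕ → ℝ) this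
  have hW := Real.Wallis.W_eq_factorial_ratio v
  have hWpos := Real.Wallis.W_pos v
  have hle := Real.Wallis.le_W v
  -- identity : a ^ 2 * W v = 2 v + 1
  have hid : a ^ 2 * Real.Wallis.W v = 2 * (v : ℝ) + 1 := by
    rw [hW, ← hfac, ha]
    have h4 : (4 : ℝ) ^ v = 2 ^ (2 * v) := by
      rw [show (4 : ℝ) = 2 ^ 2 by norm_num, ← pow_mul]
    have h16 : (2 : ℝ) ^ (4 * v) = (2 ^ (2 * v)) ^ 2 := by
      rw [← pow_mul]; ring_nf
    rw [h4, h16]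
    have hne1 : (2 : ℝ) ^ (2 * v) ≠ 0 := by positivity
    have hne2 : (Nat.factorial v : ℝ) ≠ 0 := by positivity
    have hne3 : ((Nat.choose (2 * v) v : ℝ) * (Nat.factorial v : ℝ) * (Nat.factorial v : ℝ)) ^ 2 * (2 * (v:ℝ) + 1) ≠ 0 := by
      have : (0:ℝ) < (Nat.choose (2 * v) v : ℝ) := by
        exact_mod_cast Nat.cast_pos.mpr (Nat.choose_pos (show v ≤ 2 * v by omega))
      positivity
    field_simp
    ring
    exact mul_inv_cancel₀ (Nat.cast_ne_zero.mpr (Nat.choose_pos (by omega)).ne')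
  have hpi := Real.pi_pos
  have ha2 : a ^ 2 ≤ 4 * ((v : ℝ) + 1) / Real.pi := by
    have hWlb : (2 * (v : ℝ) + 1) / (2 * (v : ℝ) + 2) * (Real.pi / 2) ≤ Real.Wallis.W v := hle
    have h1 : a ^ 2 = (2 * (v : ℝ) + 1) / Real.Wallis.W v := by
      field_simp [hWpos.ne'] at hid ⊢
      linarith [hid]
    rw [h1, div_le_div_iff₀ hWpos hpi]
    have hmul := mul_le_mul_of_nonneg_left hWlb (show (0:ℝ) ≤ 4 * ((v : ℝ) + 1) by positivity)
    have heq : 4 * ((v : ℝ) + 1) * ((2 * (v:ℝ) + 1) / (2 * (v:ℝ) + 2) * (Real.pi / 2))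
        = (2 * (v : ℝ) + 1) * Real.pi := by
      field_simp
      ring
    linarith
  calc a = Real.sqrt (a ^ 2) := (Real.sqrt_sq hapos).symm
    _ ≤ Real.sqrt (4 * ((v : ℝ) + 1) / Real.pi) := Real.sqrt_le_sqrt ha2
    _ = 2 * Real.sqrt (((v : ℝ) + 1) / Real.pi) := by
        rw [show 4 * ((v : ℝ) + 1) / Real.pi = 2^2 * (((v:ℝ)+1)/Real.pi) by ring,
          Real.sqrt_mul (by positivity), Real.sqrt_sq (by norm_num)]

lemma majErr_deriv_bound (v : ℕ) (p : ℝ) (hp : p ∈ Set.Icc (0:ℝ) 1) :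
    |deriv (majErr v) p| ≤ 2 * Real.sqrt (((v : ℝ) + 1) / Real.pi) := by
  have hd := (majErr_hasDerivAt v p).deriv
  rw [hd, abs_neg]
  obtain ⟨h0, h1⟩ := hp
  have hpq : 0 ≤ p * (1 - p) := by nlinarith
  have hpq4 : p * (1 - p) ≤ 1 / 4 := by nlinarith [sq_nonneg (2 * p - 1)]
  have hC : (0:ℝ) ≤ (2 * (v : ℝ) + 1) * (Nat.choose (2 * v) v : ℝ) := by positivity
  rw [abs_of_nonneg (by positivity)]
  have hpow : (p * (1 - p)) ^ v ≤ (1 / 4 : ℝ) ^ v := pow_le_pow_left₀ hpq hpq4 v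
  have : (2 * (v : ℝ) + 1) * (Nat.choose (2 * v) v : ℝ) * (p * (1 - p)) ^ v
      ≤ (2 * (v : ℝ) + 1) * (Nat.choose (2 * v) v : ℝ) / 4 ^ v := by
    have := mul_le_mul_of_nonneg_left hpow hC
    calc (2 * (v : ℝ) + 1) * (Nat.choose (2 * v) v : ℝ) * (p * (1 - p)) ^ v
        ≤ (2 * (v : ℝ) + 1) * (Nat.choose (2 * v) v : ℝ) * (1/4) ^ v := this
      _ = (2 * (v : ℝ) + 1) * (Nat.choose (2 * v) v : ℝ) / 4 ^ v := by
          rw [div_pow, one_pow]; ring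
  exact this.trans (key v)

/-- Lipschitz constant of the majority-vote error function: `c_v` is differentiable on
`(0,1)` with `|c_v'(p)| ≤ 2√((v+1)/π)`, and, with `V = 2v+1`, it is
`2√((V+1)/(2π))`-Lipschitz on `[0,1]`. -/
theorem majErr_lipschitz (v : ℕ) :
    DifferentiableOn ℝ (majErr v) (Set.Ioo (0 : ℝ) 1) ∧
    (∀ p ∈ Set.Ioo (0 : ℝ) 1,
      |deriv (majErr v) p| ≤ 2 * Real.sqrt (((v : ℝ) + 1) / Real.pi)) ∧
    LipschitzOnWith
      (Real.toNNReal (2 * Real.sqrt ((((2 * v + 1 : ℕ) : ℝ) + 1) / (2 * Real.pi))))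
      (majErr v) (Set.Icc (0 : ℝ) 1) := by
  have hdiff : ∀ p : ℝ, DifferentiableAt ℝ (majErr v) p :=
    fun p => (majErr_hasDerivAt v p).differentiableAt
  have hconst : (((2 * v + 1 : ℕ) : ℝ) + 1) / (2 * Real.pi) = ((v : ℝ) + 1) / Real.pi := by
    push_cast
    rw [div_eq_div_iff (by positivity) Real.pi_pos.ne']
    ring
  refine ⟨fun p _ => (hdiff p).differentiableWithinAt, fun p hp =>
    majErr_deriv_bound v p ⟨le_of_lt hp.1, le_of_lt hp.2⟩, ?_⟩
  rw [hconst]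
  apply Convex.lipschitzOnWith_of_nnnorm_deriv_le (fun x _ => hdiff x) ?_ (convex_Icc 0 1)
  intro x hx
  have hb := majErr_deriv_bound v x hx
  rw [← NNReal.coe_le_coe]
  rw [coe_nnnorm, Real.norm_eq_abs]
  rw [Real.coe_toNNReal _ (by positivity)]
  exact hb
end
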